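/- The standard Cauchy density f(x) = 1/(π(1+x²)) is bell-shaped of all orders: for every n ≥ 0, its n-th derivative f^(n) vanishes at exactly n points of ℝ and changes sign at each of them. -/

import Mathlib

open Real

private lemma hasDerivAt_cim {F : ℝ → ℂ} {F' : ℂ} {x : ℝ} (h : HasDerivAt F F' x) :
    HasDerivAt (fun x => (F x).im) F'.im x := by
  have h2 := (Complex.imCLM.hasFDerivAt (x := F x)).comp x h.hasFDerivAt
  exact (Complex.imCLM.hasFDerivAt (x := F x)).comp_hasDerivAt x h

private lemma sub_I_ne (x : ℝ) : (x : ℂ) - Complex.I ≠ 0 := by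
  intro h
  have := congrArg Complex.im h
  simp at this

private lemma hasDerivAt_G (n : ℕ) (x : ℝ) :
    HasDerivAt (fun y : ℝ => (((y : ℂ) - Complex.I)⁻¹) ^ (n + 1))
      (((-((n : ℝ) + 1) : ℝ) : ℂ) * (((x : ℂ) - Complex.I)⁻¹) ^ (n + 2)) x := by
  have h0 : HasDerivAt (fun z : ℂ => z - Complex.I) 1 (x : ℂ) :=
    (hasDerivAt_id _).sub_const _
  have h1 := ((h0.inv (sub_I_ne x)).pow (n + 1)).comp_ofReal
  convert h1 using 1
  · funext y; rfl
  have hc := sub_I_ne x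
  simp only [Nat.add_sub_cancel, Pi.inv_apply, inv_pow, pow_add]
  push_cast
  field_simp

private lemma cauchy_iteratedDeriv (n : ℕ) :
    iteratedDeriv n (fun t : ℝ => 1 / (π * (1 + t ^ 2)))
      = fun x : ℝ => (-1 : ℝ) ^ n * n.factorial / π *
          (((((x : ℂ) - Complex.I)⁻¹) ^ (n + 1)).im) := by
  induction n with
  | zero =>
    funext x
    have hn : Complex.normSq ((x : ℂ) - Complex.I) = 1 + x ^ 2 := by
      simp [Complex.normSq_apply]; ring
    simp [Complex.inv_im, hn]
    ring
  | succ n ih =>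
    funext x
    rw [iteratedDeriv_succ, ih]
    have hD := (hasDerivAt_cim (hasDerivAt_G n x)).const_mul
      ((-1 : ℝ) ^ n * n.factorial / π)
    rw [hD.deriv]
    have him : ((((-((n : ℝ) + 1) : ℝ) : ℂ) * (((x : ℂ) - Complex.I)⁻¹) ^ (n + 2)).im)
        = (-((n : ℝ) + 1)) * ((((x : ℂ) - Complex.I)⁻¹) ^ (n + 2)).im := by
      simp [Complex.mul_im]
    rw [him, Nat.factorial_succ]
    push_cast
    ring

private lemma inv_eq_polar (x : ℝ) : ((x : ℂ) - Complex.I)⁻¹ =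
    (Real.cos (arctan x) : ℂ) * Complex.exp (((π / 2 - arctan x : ℝ) : ℂ) * Complex.I) := by
  apply inv_eq_of_mul_eq_one_right
  rw [Complex.exp_mul_I, ← Complex.ofReal_cos, ← Complex.ofReal_sin,
    Real.cos_pi_div_two_sub, Real.sin_pi_div_two_sub]
  have hs : Real.sin (arctan x) = x * Real.cos (arctan x) := by
    rw [Real.sin_arctan, Real.cos_arctan]; ring
  rw [hs]
  have hc2 : (Real.cos (arctan x)) ^ 2 = 1 / (1 + x ^ 2) := Real.cos_sq_arctan x
  have h1 : (0:ℝ) < 1 + x ^ 2 := by positivity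
  have : ((x : ℂ) - Complex.I) * (↑(Real.cos (arctan x)) *
      (↑(x * Real.cos (arctan x)) + ↑(Real.cos (arctan x)) * Complex.I))
      = ((Real.cos (arctan x) ^ 2 * (1 + x ^ 2) : ℝ) : ℂ) := by
    push_cast
    ring_nf
    rw [Complex.I_sq]
    ring
  rw [this, hc2]
  field_simp
  simp

private lemma im_pow_eq (n : ℕ) (x : ℝ) :
    (((((x : ℂ) - Complex.I)⁻¹) ^ (n + 1)).im)
      = Real.cos (arctan x) ^ (n + 1) *
        Real.sin ((n + 1) * (π / 2 - arctan x)) := by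
  rw [inv_eq_polar, mul_pow, ← Complex.exp_nat_mul]
  have : ((n + 1 : ℕ) : ℂ) * (((π / 2 - arctan x : ℝ) : ℂ) * Complex.I)
      = (((n + 1 : ℕ) * (π / 2 - arctan x) : ℝ) : ℂ) * Complex.I := by
    push_cast; ring
  rw [this, ← Complex.ofReal_pow, Complex.mul_im, Complex.ofReal_re, Complex.ofReal_im,
    Complex.exp_ofReal_mul_I_im, zero_mul, add_zero]
  push_cast
  ring

noncomputable def cauchyA (n : ℕ) (x : ℝ) : ℝ :=
  (-1 : ℝ) ^ n * n.factorial / π * Real.cos (arctan x) ^ (n + 1)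

noncomputable def cauchyU (n : ℕ) (x : ℝ) : ℝ := ((n : ℝ) + 1) * (π / 2 - arctan x)

lemma cauchy_master (n : ℕ) (x : ℝ) :
    iteratedDeriv n (fun t : ℝ => 1 / (π * (1 + t ^ 2))) x
      = cauchyA n x * Real.sin (cauchyU n x) := by
  have h := congrFun (cauchy_iteratedDeriv n) x
  rw [h, im_pow_eq]
  unfold cauchyA cauchyU
  ring

lemma cauchyA_mul_pos (n : ℕ) (y z : ℝ) : 0 < cauchyA n y * cauchyA n z := by
  have h : cauchyA n y * cauchyA n z = ((n.factorial : ℝ) / π) ^ 2 *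
      (Real.cos (arctan y) ^ (n + 1) * Real.cos (arctan z) ^ (n + 1)) * ((-1 : ℝ) ^ n) ^ 2 := by
    unfold cauchyA; ring
  rw [h, ← pow_mul, mul_comm n 2, pow_mul, neg_one_sq, one_pow, mul_one]
  have h0 := Real.pi_pos
  have h1 := Real.cos_arctan_pos y
  have h2 := Real.cos_arctan_pos z
  have h3 := n.factorial_pos
  positivity

lemma cauchyU_bounds (n : ℕ) (x : ℝ) : 0 < cauchyU n x ∧ cauchyU n x < ((n : ℝ) + 1) * π := by
  have h1 := arctan_lt_pi_div_two x
  have h2 := neg_pi_div_two_lt_arctan x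
  have hn : (0 : ℝ) < (n : ℝ) + 1 := by positivity
  have hπ := Real.pi_pos
  constructor
  · apply mul_pos hn; linarith
  · have : π / 2 - arctan x < π := by linarith
    exact mul_lt_mul_of_pos_left this hn

lemma cauchyU_anti (n : ℕ) {a b : ℝ} (h : a < b) : cauchyU n b < cauchyU n a := by
  have := arctan_strictMono h
  have hn : (0 : ℝ) < (n : ℝ) + 1 := by positivity
  unfold cauchyU
  apply mul_lt_mul_of_pos_left (by linarith) hn

noncomputable def cauchyX (n k : ℕ) : ℝ := tan (π / 2 - (k : ℝ) * π / ((n : ℝ) + 1))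

lemma theta_bounds {n k : ℕ} (hk1 : 1 ≤ k) (hk2 : k ≤ n) :
    -(π / 2) < π / 2 - (k : ℝ) * π / ((n : ℝ) + 1) ∧
      π / 2 - (k : ℝ) * π / ((n : ℝ) + 1) < π / 2 := by
  have hπ := Real.pi_pos
  have hn : (0 : ℝ) < (n : ℝ) + 1 := by positivity
  have hk1' : (1 : ℝ) ≤ (k : ℝ) := by exact_mod_cast hk1
  have hk2' : (k : ℝ) < (n : ℝ) + 1 := by
    have : (k : ℝ) ≤ (n : ℝ) := by exact_mod_cast hk2
    linarith
  constructor
  · have : (k : ℝ) * π / ((n : ℝ) + 1) < π := by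
      rw [div_lt_iff₀ hn]; nlinarith
    linarith
  · have : 0 < (k : ℝ) * π / ((n : ℝ) + 1) := by positivity
    linarith

lemma arctan_cauchyX {n k : ℕ} (hk1 : 1 ≤ k) (hk2 : k ≤ n) :
    arctan (cauchyX n k) = π / 2 - (k : ℝ) * π / ((n : ℝ) + 1) := by
  obtain ⟨h1, h2⟩ := theta_bounds hk1 hk2
  exact arctan_tan h1 h2

lemma cauchyU_cauchyX {n k : ℕ} (hk1 : 1 ≤ k) (hk2 : k ≤ n) :
    cauchyU n (cauchyX n k) = (k : ℝ) * π := by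
  rw [cauchyU, arctan_cauchyX hk1 hk2]
  have hn : ((n : ℝ) + 1) ≠ 0 := by positivity
  field_simp
  ring

theorem cauchy_density_bell_shaped (n : ℕ) :
    ∃ Z : Finset ℝ, Z.card = n ∧
      (∀ x : ℝ, iteratedDeriv n (fun t : ℝ => 1 / (π * (1 + t ^ 2))) x = 0 ↔ x ∈ Z) ∧
      ∀ x ∈ Z, ∃ ε > (0:ℝ), ∀ y z : ℝ, x - ε < y → y < x → x < z → z < x + ε →
        iteratedDeriv n (fun t : ℝ => 1 / (π * (1 + t ^ 2))) y *
          iteratedDeriv n (fun t : ℝ => 1 / (π * (1 + t ^ 2))) z < 0 := by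
  classical
  have hπ := Real.pi_pos
  have hn1 : (0 : ℝ) < (n : ℝ) + 1 := by positivity
  refine ⟨(Finset.Icc 1 n).image (cauchyX n), ?_, ?_, ?_⟩
  · -- card
    have hinj : Set.InjOn (cauchyX n) (Finset.Icc 1 n) := by
      intro k hk j hj h
      simp only [Finset.coe_Icc, Set.mem_Icc] at hk hj
      have hak := arctan_cauchyX hk.1 hk.2
      have haj := arctan_cauchyX hj.1 hj.2
      rw [h, haj] at hak
      field_simp at hak
      exact_mod_cast (by linarith : (k:ℝ) = j)
    rw [Finset.card_image_of_injOn hinj, Nat.card_Icc]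
    omega
  · -- zero iff
    intro x
    rw [cauchy_master]
    constructor
    · intro h
      have hA : cauchyA n x ≠ 0 := by
        have := cauchyA_mul_pos n x x
        exact mul_self_pos.mp this
      have hs : Real.sin (cauchyU n x) = 0 := by
        rcases mul_eq_zero.mp h with h' | h'
        · exact absurd h' hA
        · exact h'
      obtain ⟨m, hm⟩ := Real.sin_eq_zero_iff.mp hs
      obtain ⟨hu0, hu1⟩ := cauchyU_bounds n x
      have hm0 : (0 : ℝ) < (m : ℝ) := by
        have : 0 < (m : ℝ) * π := by rw [hm]; exact hu0
        by_contra hcon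
        push_neg at hcon
        nlinarith
      have hm1 : (m : ℝ) < (n : ℝ) + 1 := by
        have h2 : (m : ℝ) * π < ((n : ℝ) + 1) * π := by rw [hm]; exact hu1
        by_contra hcon
        push_neg at hcon
        nlinarith
      have hm0' : 1 ≤ m := by exact_mod_cast hm0
      have hm1' : (m : ℤ) ≤ n := by
        have : (m : ℝ) < (n : ℝ) + 1 := hm1
        exact_mod_cast Int.lt_add_one_iff.mp (by exact_mod_cast this)
      set k := m.toNat with hkdef
      have hmk : (m : ℝ) = (k : ℝ) := by
        have h' : ((k : ℕ) : ℤ) = m := Int.toNat_of_nonneg (by omega)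
        exact_mod_cast h'.symm
      have hk1 : 1 ≤ k := by omega
      have hk2 : k ≤ n := by omega
      -- arctan x = θ k
      have harc : arctan x = π / 2 - (k : ℝ) * π / ((n : ℝ) + 1) := by
        have he : ((n : ℝ) + 1) * (π / 2 - arctan x) = (k : ℝ) * π := by
          rw [← hmk, hm]; rfl
        have h2 : π / 2 - arctan x = (k : ℝ) * π / ((n : ℝ) + 1) := by
          rw [eq_div_iff (ne_of_gt hn1)]
          linear_combination he
        linarith [h2]
      have hx : x = cauchyX n k := by
        rw [cauchyX, ← harc, Real.tan_arctan]
      rw [Finset.mem_image]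
      exact ⟨k, Finset.mem_Icc.mpr ⟨hk1, hk2⟩, hx.symm⟩
    · intro hx
      rw [Finset.mem_image] at hx
      obtain ⟨k, hk, hxk⟩ := hx
      rw [Finset.mem_Icc] at hk
      have := cauchyU_cauchyX hk.1 hk.2 (n := n)
      rw [hxk] at this
      rw [this]
      have : Real.sin ((k : ℝ) * π) = 0 := by
        have := Real.sin_int_mul_pi (k : ℤ)
        push_cast at this
        exact this
      rw [this, mul_zero]
  · -- sign changes
    intro x hx
    rw [Finset.mem_image] at hx
    obtain ⟨k, hk, hxk⟩ := hx
    rw [Finset.mem_Icc] at hk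
    have hux : cauchyU n x = (k : ℝ) * π := by
      rw [← hxk]; exact cauchyU_cauchyX hk.1 hk.2
    have hcont : ContinuousAt (cauchyU n) x := by
      apply Continuous.continuousAt
      unfold cauchyU
      exact continuous_const.mul (continuous_const.sub Real.continuous_arctan)
    obtain ⟨δ, hδ, hδ'⟩ := Metric.continuousAt_iff.mp hcont π hπ
    refine ⟨δ, hδ, ?_⟩
    intro y z hy1 hy2 hz1 hz2
    have hdy : dist y x < δ := by
      rw [Real.dist_eq, abs_lt]; constructor <;> linarith
    have hdz : dist z x < δ := by
      rw [Real.dist_eq, abs_lt]; constructor <;> linarith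
    have hay := hδ' hdy
    have haz := hδ' hdz
    rw [Real.dist_eq, abs_lt, hux] at hay haz
    have huy1 : (k : ℝ) * π < cauchyU n y := by
      have := cauchyU_anti n hy2; rw [hux] at this; exact this
    have huy2 : cauchyU n y < ((k : ℝ) + 1) * π := by nlinarith [hay.2]
    have huz1 : cauchyU n z < (k : ℝ) * π := by
      have := cauchyU_anti n hz1; rw [hux] at this; exact this
    have huz2 : ((k : ℝ) - 1) * π < cauchyU n z := by nlinarith [haz.1]
    -- sin signs
    have hsy : Real.sin (cauchyU n y)
        = -((-1 : ℝ) ^ ((k : ℤ) + 1) * Real.sin (((k : ℝ) + 1) * π - cauchyU n y)) := by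
      have h := Real.sin_int_mul_pi_sub (((k : ℝ) + 1) * π - cauchyU n y) ((k : ℤ) + 1)
      have e : ((((k : ℤ) + 1) : ℤ) : ℝ) * π - (((k : ℝ) + 1) * π - cauchyU n y)
          = cauchyU n y := by push_cast; ring
      rw [e] at h
      exact h
    have hsz : Real.sin (cauchyU n z)
        = -((-1 : ℝ) ^ ((k : ℤ)) * Real.sin ((k : ℝ) * π - cauchyU n z)) := by
      have h := Real.sin_int_mul_pi_sub ((k : ℝ) * π - cauchyU n z) ((k : ℤ))
      have e : (((k : ℤ)) : ℝ) * π - ((k : ℝ) * π - cauchyU n z) = cauchyU n z := by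
        push_cast; ring
      rw [e] at h
      exact h
    have hp1 : 0 < Real.sin (((k : ℝ) + 1) * π - cauchyU n y) :=
      Real.sin_pos_of_pos_of_lt_pi (by linarith) (by nlinarith)
    have hp2 : 0 < Real.sin ((k : ℝ) * π - cauchyU n z) :=
      Real.sin_pos_of_pos_of_lt_pi (by linarith) (by nlinarith)
    have hsign : ((-1 : ℝ) ^ ((k : ℤ) + 1)) * ((-1 : ℝ) ^ ((k : ℤ))) = -1 := by
      rw [← zpow_add₀ (by norm_num : (-1 : ℝ) ≠ 0)]
      have : (k : ℤ) + 1 + (k : ℤ) = 2 * k + 1 := by ring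
      rw [this]
      exact Odd.neg_one_zpow ⟨(k : ℤ), by ring⟩
    have hprod : Real.sin (cauchyU n y) * Real.sin (cauchyU n z) < 0 := by
      rw [hsy, hsz, neg_mul_neg, mul_mul_mul_comm, hsign]
      nlinarith
    rw [cauchy_master, cauchy_master]
    have heq : cauchyA n y * Real.sin (cauchyU n y) * (cauchyA n z * Real.sin (cauchyU n z))
        = (cauchyA n y * cauchyA n z) * (Real.sin (cauchyU n y) * Real.sin (cauchyU n z)) := by
      ring
    rw [heq]
    exact mul_neg_of_pos_of_neg (cauchyA_mul_pos n y z) hprod
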